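/- Let T_N be the tridiagonal matrix above with r = 0 (so p + q = 1). Then −1 is an eigenvalue of T_N, and its eigenspace is one-dimensional. -/

import Mathlib

/-- The Jacobi matrix of the one-dimensional reduction of the Grover walk on the
path of length `N`: `(N+1) × (N+1)` symmetric tridiagonal matrix with diagonal
`(0, r, …, r, 0)` and off-diagonal entries `√q` (between indices 0 and 1),
`√(pq)` (between interior indices) and `√p` (between indices N−1 and N). -/
noncomputable def TN (p q r : ℝ) (N : ℕ) : Matrix (Fin (N + 1)) (Fin (N + 1)) ℝ :=
  Matrix.of fun i j =>
    if (i : ℕ) = (j : ℕ) then (if (i : ℕ) = 0 ∨ (i : ℕ) = N then 0 else r)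
    else if (i : ℕ) + 1 = (j : ℕ) ∨ (j : ℕ) + 1 = (i : ℕ) then
      (if (i : ℕ) = 0 ∨ (j : ℕ) = 0 then Real.sqrt q
       else if (i : ℕ) = N ∨ (j : ℕ) = N then Real.sqrt p
       else Real.sqrt (p * q))
    else 0

noncomputable def off (p q : ℝ) (N : ℕ) : ℕ → ℝ := fun k =>
  if k = 0 then Real.sqrt q else if k + 1 = N then Real.sqrt p
  else Real.sqrt p * Real.sqrt q

lemma TN_apply (p q : ℝ) (hp : 0 ≤ p) (N : ℕ) (i j : Fin (N+1)) :
    TN p q 0 N i j = if (i:ℕ)+1 = (j:ℕ) then off p q N i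
      else if (j:ℕ)+1 = (i:ℕ) then off p q N j else 0 := by
  simp only [TN, Matrix.of_apply, off, Real.sqrt_mul hp]
  split_ifs <;> first | rfl | omega

lemma mulVec_TN (p q : ℝ) (hp : 0 ≤ p) (N : ℕ) (w : Fin (N+1) → ℝ) (i : Fin (N+1)) :
    (TN p q 0 N).mulVec w i =
      (if h : (i:ℕ) < N then off p q N i * w ⟨(i:ℕ)+1, by omega⟩ else 0)
      + (if h : 0 < (i:ℕ) then off p q N ((i:ℕ)-1) * w ⟨(i:ℕ)-1, by omega⟩ else 0) := by
  unfold Matrix.mulVec dotProduct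
  have key : ∀ j : Fin (N+1), TN p q 0 N i j * w j =
      (if (i:ℕ)+1 = (j:ℕ) then off p q N i * w j else 0)
      + (if (j:ℕ)+1 = (i:ℕ) then off p q N ((i:ℕ)-1) * w j else 0) := by
    intro j
    rw [TN_apply p q hp]
    split_ifs with h1 h2 h3 h4 h5 h6
    · exfalso; omega
    · ring
    · have hj : (j:ℕ) = (i:ℕ)-1 := by omega
      rw [hj]; ring
    · ring
  rw [Finset.sum_congr rfl (fun j _ => key j), Finset.sum_add_distrib]
  congr 1
  · by_cases h : (i:ℕ) < N
    · rw [dif_pos h]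
      have : ∀ j : Fin (N+1), (if (i:ℕ)+1 = (j:ℕ) then off p q N i * w j else 0)
          = if j = (⟨(i:ℕ)+1, by omega⟩ : Fin (N+1)) then off p q N i * w j else 0 := by
        intro j
        congr 1
        simp [Fin.ext_iff, eq_comm]
      rw [Finset.sum_congr rfl (fun j _ => this j), Finset.sum_ite_eq' Finset.univ]
      simp
    · rw [dif_neg h]
      refine Finset.sum_eq_zero fun j _ => ?_
      rw [if_neg (by have := j.isLt; omega)]
  · by_cases h : 0 < (i:ℕ)
    · rw [dif_pos h]
      have hi' := i.isLt
      have : ∀ j : Fin (N+1), (if (j:ℕ)+1 = (i:ℕ) then off p q N ((i:ℕ)-1) * w j else 0)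
          = if j = (⟨(i:ℕ)-1, by omega⟩ : Fin (N+1)) then off p q N ((i:ℕ)-1) * w j else 0 := by
        intro j
        congr 1
        have := j.isLt
        simp [Fin.ext_iff]
        omega
      rw [Finset.sum_congr rfl (fun j _ => this j), Finset.sum_ite_eq' Finset.univ]
      simp
    · rw [dif_neg h]
      refine Finset.sum_eq_zero fun j _ => ?_
      rw [if_neg (by omega)]
noncomputable def Vv (p q : ℝ) (N : ℕ) : ℕ → ℝ := fun j =>
  if j = 0 then Real.sqrt q ^ (N-1)
  else if j = N then (-1:ℝ)^N * Real.sqrt p ^ (N-1)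
  else (-1:ℝ)^j * Real.sqrt p ^ (j-1) * Real.sqrt q ^ (N-1-j)

lemma off_ne (p q : ℝ) (hp : 0 < p) (hq : 0 < q) (N k : ℕ) : off p q N k ≠ 0 := by
  have h1 := Real.sqrt_pos.2 hp
  have h2 := Real.sqrt_pos.2 hq
  unfold off
  split_ifs <;> positivity

lemma off_zero (p q : ℝ) (N : ℕ) : off p q N 0 = Real.sqrt q := if_pos rfl

lemma off_last (p q : ℝ) (N k : ℕ) (h0 : k ≠ 0) (h1 : k + 1 = N) :
    off p q N k = Real.sqrt p := by
  unfold off; rw [if_neg h0, if_pos h1]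

lemma off_mid (p q : ℝ) (N k : ℕ) (h0 : k ≠ 0) (h1 : k + 1 ≠ N) :
    off p q N k = Real.sqrt p * Real.sqrt q := by
  unfold off; rw [if_neg h0, if_neg h1]

lemma Vv_zero (p q : ℝ) (N : ℕ) : Vv p q N 0 = Real.sqrt q ^ (N-1) := if_pos rfl

lemma Vv_last (p q : ℝ) (N : ℕ) (h : N ≠ 0) :
    Vv p q N N = (-1:ℝ)^N * Real.sqrt p ^ (N-1) := by
  unfold Vv; rw [if_neg h, if_pos rfl]

lemma Vv_mid (p q : ℝ) (N j : ℕ) (h0 : j ≠ 0) (h1 : j ≠ N) :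
    Vv p q N j = (-1:ℝ)^j * Real.sqrt p ^ (j-1) * Real.sqrt q ^ (N-1-j) := by
  unfold Vv; rw [if_neg h0, if_neg h1]

lemma rowsV (p q : ℝ) (hp : 0 < p) (hq : 0 < q) (hpq : p + q = 1)
    (N : ℕ) (hN : 2 ≤ N) (k : ℕ) (hk : k ≤ N) :
    (if k < N then off p q N k * Vv p q N (k+1) else 0)
      + (if 0 < k then off p q N (k-1) * Vv p q N (k-1) else 0) = -(Vv p q N k) := by
  have hsp2 : Real.sqrt p ^ 2 = p := Real.sq_sqrt hp.le
  have hsq2 : Real.sqrt q ^ 2 = q := Real.sq_sqrt hq.le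
  have hpq' : Real.sqrt p ^ 2 + Real.sqrt q ^ 2 = 1 := by rw [hsp2, hsq2]; exact hpq
  set sp := Real.sqrt p with hsp
  set sq := Real.sqrt q with hsq
  rcases Nat.eq_zero_or_pos k with rfl | hk0
  · -- k = 0
    rw [if_pos (by omega), if_neg (by omega), Vv_zero,
      off_zero, Vv_mid _ _ _ _ (show 0+1 ≠ 0 by omega) (show 0+1 ≠ N by omega)]
    rw [show N-1-(0+1) = N-2 by omega, show N-1 = (N-2)+1 by omega]
    ring
  · rcases eq_or_lt_of_le hk with rfl | hkN
    · -- k = N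
      obtain ⟨m, rfl⟩ : ∃ m, k = m + 2 := ⟨k - 2, by omega⟩
      rw [if_neg (by omega), if_pos (by omega),
        off_last _ _ _ _ (show m+2-1 ≠ 0 by omega) (show (m+2-1)+1 = m+2 by omega),
        Vv_mid _ _ _ _ (show m+2-1 ≠ 0 by omega) (show m+2-1 ≠ m+2 by omega),
        Vv_last _ _ _ (show m+2 ≠ 0 by omega)]
      rw [show m+2-1-(m+2-1) = 0 by omega, show m+2-1-1 = m by omega,
        show m+2-1 = m+1 by omega]
      ring
    · rcases eq_or_lt_of_le (show 1 ≤ k from hk0) with hk1 | hk2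
      · -- k = 1
        obtain rfl : k = 1 := by omega
        rcases eq_or_lt_of_le hN with hN2 | hN3
        · -- N = 2
          obtain rfl : N = 2 := by omega
          rw [if_pos (by omega), if_pos (by omega),
            off_last _ _ _ _ (show (1:ℕ) ≠ 0 by omega) (show 1+1 = 2 by omega),
            Vv_last _ _ _ (show (2:ℕ) ≠ 0 by omega),
            off_zero, Vv_zero,
            Vv_mid _ _ _ _ (show (1:ℕ) ≠ 0 by omega) (show (1:ℕ) ≠ 2 by omega)]
          norm_num
          linear_combination hpq'
        · -- N ≥ 3
          obtain ⟨b, rfl⟩ : ∃ b, N = b + 3 := ⟨N - 3, by omega⟩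
          rw [if_pos (by omega), if_pos (by omega),
            off_mid _ _ _ _ (show (1:ℕ) ≠ 0 by omega) (show 1+1 ≠ b+3 by omega),
            Vv_mid _ _ _ _ (show 1+1 ≠ 0 by omega) (show 1+1 ≠ b+3 by omega),
            off_zero, Vv_zero,
            Vv_mid _ _ _ _ (show (1:ℕ) ≠ 0 by omega) (show (1:ℕ) ≠ b+3 by omega)]
          rw [show b+3-1-(1+1) = b by omega, show b+3-1-1 = b+1 by omega,
            show b+3-1 = b+2 by omega, show (1:ℕ)-1 = 0 by omega,
            show (1:ℕ)+1-1 = 1 by omega]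
          linear_combination (sq^(b+1)) * hpq'
      · rcases eq_or_lt_of_le (show k + 1 ≤ N by omega) with hkN1 | hkN2
        · -- k = N-1
          obtain ⟨m, rfl⟩ : ∃ m, k = m + 2 := ⟨k - 2, by omega⟩
          obtain rfl : N = m + 3 := by omega
          rw [if_pos (by omega), if_pos (by omega),
            off_last _ _ _ _ (show m+2 ≠ 0 by omega) (show m+2+1 = m+3 by omega),
            Vv_last _ _ _ (show m+3 ≠ 0 by omega),
            off_mid _ _ _ _ (show m+2-1 ≠ 0 by omega) (show (m+2-1)+1 ≠ m+3 by omega),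
            Vv_mid _ _ _ _ (show m+2-1 ≠ 0 by omega) (show m+2-1 ≠ m+3 by omega),
            Vv_mid _ _ _ _ (show m+2 ≠ 0 by omega) (show m+2 ≠ m+3 by omega)]
          rw [show m+3-1-(m+2-1) = 1 by omega, show m+3-1-(m+2) = 0 by omega,
            show m+2-1-1 = m by omega, show m+3-1 = m+2 by omega,
            show m+2-1 = m+1 by omega]
          linear_combination ((-1:ℝ)^(m+3) * sp^(m+1)) * hpq'
        · -- interior
          obtain ⟨a, rfl⟩ : ∃ a, k = a + 2 := ⟨k - 2, by omega⟩
          obtain ⟨b, rfl⟩ : ∃ b, N = a + b + 4 := ⟨N - a - 4, by omega⟩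
          rw [if_pos (by omega), if_pos (by omega),
            off_mid _ _ _ _ (show a+2 ≠ 0 by omega) (show a+2+1 ≠ a+b+4 by omega),
            Vv_mid _ _ _ _ (show a+2+1 ≠ 0 by omega) (show a+2+1 ≠ a+b+4 by omega),
            off_mid _ _ _ _ (show a+2-1 ≠ 0 by omega) (show (a+2-1)+1 ≠ a+b+4 by omega),
            Vv_mid _ _ _ _ (show a+2-1 ≠ 0 by omega) (show a+2-1 ≠ a+b+4 by omega),
            Vv_mid _ _ _ _ (show a+2 ≠ 0 by omega) (show a+2 ≠ a+b+4 by omega)]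
          rw [show a+b+4-1-(a+2+1) = b by omega, show a+b+4-1-(a+2-1) = b+2 by omega,
            show a+b+4-1-(a+2) = b+1 by omega, show a+2+1-1 = a+2 by omega,
            show a+2-1-1 = a by omega, show a+2-1 = a+1 by omega]
          linear_combination ((-1:ℝ)^(a+1) * sp^(a+1) * sq^(b+1)) * hpq'

theorem stmt8 (p q : ℝ) (hp : 0 < p) (hq : 0 < q) (hpq : p + q = 1)
    (N : ℕ) (hN : 2 ≤ N) :
    ∃ v : Fin (N + 1) → ℝ, v ≠ 0 ∧ (TN p q 0 N).mulVec v = (-1 : ℝ) • v ∧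
      ∀ w : Fin (N + 1) → ℝ, (TN p q 0 N).mulVec w = (-1 : ℝ) • w →
        ∃ c : ℝ, w = c • v := by
  have hsq0 : Real.sqrt q ≠ 0 := ne_of_gt (Real.sqrt_pos.2 hq)
  have hV0 : Vv p q N 0 ≠ 0 := by rw [Vv_zero]; exact pow_ne_zero _ hsq0
  refine ⟨fun i => Vv p q N (i : ℕ), ?_, ?_, ?_⟩
  · intro h
    have h0 := congrFun h ⟨0, by omega⟩
    exact hV0 h0
  · funext i
    rw [mulVec_TN p q hp.le]
    have h := rowsV p q hp hq hpq N hN (i : ℕ) (by omega)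
    have hi := i.isLt
    split_ifs at h ⊢ <;> simpa using h
  · intro w hw
    set c : ℝ := w ⟨0, by omega⟩ / Vv p q N 0 with hc
    have row : ∀ k, ∀ hk1 : k < N, ∀ hk : k < N + 1,
        off p q N k * w ⟨k+1, by omega⟩
          + (if h : 0 < k then off p q N (k-1) * w ⟨k-1, by omega⟩ else 0)
          = (-1 : ℝ) * w ⟨k, hk⟩ := by
      intro k hk1 hk
      have h := congrFun hw ⟨k, hk⟩
      rw [mulVec_TN p q hp.le] at h
      rw [dif_pos hk1] at h
      exact h
    have key : ∀ k, ∀ hk : k < N + 1, w ⟨k, hk⟩ = c * Vv p q N k := by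
      intro k
      induction k using Nat.strong_induction_on with
      | _ k IH =>
        intro hk
        match k, hk with
        | 0, hk =>
          rw [hc, Vv_zero, div_mul_cancel₀ _ (by rw [Vv_zero] at hV0; exact hV0)]
        | 1, hk =>
          have r0 := row 0 (by omega) (by omega)
          rw [dif_neg (by omega)] at r0
          have v0 := rowsV p q hp hq hpq N hN 0 (by omega)
          rw [if_pos (by omega), if_neg (by omega)] at v0
          have i0 := IH 0 (by omega) (by omega)
          have hcan : off p q N 0 * w ⟨1, by omega⟩
              = off p q N 0 * (c * Vv p q N (0+1)) := by
            linear_combination r0 - c * v0 - i0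
          have := mul_left_cancel₀ (off_ne p q hp hq N 0) hcan
          simpa using this
        | (m+2), hk =>
          have r1 := row (m+1) (by omega) (by omega)
          rw [dif_pos (by omega)] at r1
          have v1 := rowsV p q hp hq hpq N hN (m+1) (by omega)
          rw [if_pos (by omega), if_pos (by omega)] at v1
          have i1 := IH (m+1) (by omega) (by omega)
          have i0 := IH m (by omega) (by omega)
          simp only [Nat.add_sub_cancel] at r1 v1
          have hcan : off p q N (m+1) * w ⟨m+1+1, by omega⟩
              = off p q N (m+1) * (c * Vv p q N (m+1+1)) := by
            linear_combination r1 - c * v1 - i1 - off p q N m * i0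
          have := mul_left_cancel₀ (off_ne p q hp hq N (m+1)) hcan
          simpa using this
    refine ⟨c, ?_⟩
    funext i
    have := key (i : ℕ) i.isLt
    simpa using this
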